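/- Let A be an n×n complex matrix, u, v ∈ ℂⁿ, let l be the degree of the minimal polynomial m_A of A, and suppose v*u = ⋯ = v*A^{κ−1}u = 0 and v*A^{κ}u ≠ 0 for some κ ∈ {0,…,l−1}. Suppose λ : [T,∞) → ℂ is a function of real t ≥ T such that λ(t) is an eigenvalue of A + t u v* for every t ≥ T and λ(t) admits the asymptotic expansion λ(t) = c₋₁ t^{1/(κ+1)} + c₀ + c₁ t^{−1/(κ+1)} + o(t^{−1/(κ+1)}) as t → ∞ with c₋₁ ≠ 0. Then c₋₁^{κ+1} = v*A^{κ}u, c₀ = (1/(κ+1)) · (v*A^{κ+1}u)/(v*A^{κ}u), and (κ+1)·((κ+2)/2 · c₋₁^{κ+1}c₀² + c₋₁^{κ+2}c₁) = v*A^{κ+2}u. -/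

import Mathlib

open Matrix Filter Asymptotics
open Finset Topology


theorem hid1 (S x : ℂ) (m : ℕ) : S * (1 - x^m) = (S * (1-x)) * ∑ i ∈ range m, x^i := by
  linear_combination S * geom_sum_mul x m

theorem hid2 (S x : ℂ) (m : ℕ) :
    S^2*(1-x^m) = (m:ℂ)*S*(S*(1-x)) - (S*(1-x)) * ∑ i ∈ range m, S*(1-x^i) := by
  induction m with
  | zero => simp
  | succ k ih =>
    rw [Finset.sum_range_succ]
    push_cast
    linear_combination ih

theorem tendstoPow (σ q : ℝ → ℂ) (a : ℂ) (hq : Tendsto q atTop (𝓝 1))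
    (hu : Tendsto (fun t => σ t * (1 - q t)) atTop (𝓝 a)) (m : ℕ) :
    Tendsto (fun t => σ t * (1 - q t ^ m)) atTop (𝓝 (m * a)) := by
  have h : Tendsto (fun t => (σ t * (1 - q t)) * ∑ i ∈ range m, q t ^ i) atTop
      (𝓝 (a * ∑ i ∈ range m, (1:ℂ)^i)) := by
    exact hu.mul (tendsto_finset_sum _ fun i _ => hq.pow i)
  simp only [one_pow, Finset.sum_const, Finset.card_range, nsmul_eq_mul, mul_one] at h
  rw [mul_comm]
  exact h.congr (fun t => (hid1 _ _ m).symm)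



theorem keyAsym (κ : ℕ) (cm1 c₀ c₁ m0 m1 m2 : ℂ) (hc : cm1 ≠ 0)
    (σ lam ρ : ℝ → ℂ)
    (hσ0 : ∀ᶠ t in atTop, σ t ≠ 0)
    (hσinv : Tendsto (fun t => (σ t)⁻¹) atTop (𝓝 0))
    (hε : Tendsto (fun t => (lam t - (cm1 * σ t + c₀ + c₁ / σ t)) * σ t) atTop (𝓝 0))
    (hρ : Tendsto ρ atTop (𝓝 0))
    (heq : ∀ᶠ t in atTop, (σ t)^(κ+1) * (m0 / lam t^(κ+1) + m1 / lam t^(κ+2)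
        + (m2 + ρ t)/ lam t^(κ+3)) = 1) :
    m0 = cm1^(κ+1) ∧ m1 = (κ+1 : ℂ)*c₀*m0 ∧
      m2 = (κ+1 : ℂ) * (((κ+2:ℂ)/2) * cm1^(κ+1)*c₀^2 + cm1^(κ+2)*c₁) := by
  set ε : ℝ → ℂ := fun t => (lam t - (cm1 * σ t + c₀ + c₁ / σ t)) * σ t with hεdef
  have hdiv : Tendsto (fun t => lam t / σ t) atTop (𝓝 cm1) := by
    have h : Tendsto (fun t => cm1 + c₀ * (σ t)⁻¹ + c₁ * ((σ t)⁻¹*(σ t)⁻¹)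
        + ε t * ((σ t)⁻¹*(σ t)⁻¹)) atTop (𝓝 (cm1 + c₀*0 + c₁*(0*0) + 0*(0*0))) :=
      ((tendsto_const_nhds.add (tendsto_const_nhds.mul hσinv)).add
        (tendsto_const_nhds.mul (hσinv.mul hσinv))).add (hε.mul (hσinv.mul hσinv))
    simp only [mul_zero, zero_mul, add_zero] at h
    refine h.congr' ?_
    filter_upwards [hσ0] with t h0
    simp only [hεdef]
    field_simp
    ring
  have hlam0 : ∀ᶠ t in atTop, lam t ≠ 0 := by
    filter_upwards [hdiv.eventually_ne hc, hσ0] with t h1 h2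
    intro h; exact h1 (by simp [h])
  have hr : Tendsto (fun t => σ t / lam t) atTop (𝓝 cm1⁻¹) := by
    refine (hdiv.inv₀ hc).congr' ?_
    filter_upwards [] with t
    rw [inv_div]
  have hinvlam : Tendsto (fun t => (lam t)⁻¹) atTop (𝓝 0) := by
    have h := hσinv.mul hr
    rw [zero_mul] at h
    refine h.congr' ?_
    filter_upwards [hσ0] with t h0
    field_simp
  have hq : Tendsto (fun t => cm1 * (σ t / lam t)) atTop (𝓝 1) := by
    have h : Tendsto (fun t => cm1 * (σ t / lam t)) atTop (𝓝 (cm1 * cm1⁻¹)) :=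
      tendsto_const_nhds.mul hr
    rwa [mul_inv_cancel₀ hc] at h
  have hu : Tendsto (fun t => σ t * (1 - cm1 * (σ t / lam t))) atTop (𝓝 (c₀ * cm1⁻¹)) := by
    have h : Tendsto (fun t => c₀ * (σ t / lam t) + (c₁ + ε t) * (lam t)⁻¹) atTop
        (𝓝 (c₀ * cm1⁻¹ + (c₁ + 0) * 0)) :=
      (tendsto_const_nhds.mul hr).add ((tendsto_const_nhds.add hε).mul hinvlam)
    rw [mul_zero, add_zero] at h
    refine h.congr' ?_
    filter_upwards [hσ0, hlam0] with t h0 h1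
    simp only [hεdef]
    field_simp
    ring
  have heq' : ∀ᶠ t in atTop, m0 * (σ t / lam t)^(κ+1)
      + m1 * (σ t / lam t)^(κ+1) * (lam t)⁻¹
      + (m2 + ρ t) * (σ t / lam t)^(κ+1) * ((lam t)⁻¹ * (lam t)⁻¹) = 1 := by
    filter_upwards [heq] with t ht
    linear_combination ht
  -- first conclusion
  have T1 : Tendsto (fun t => m0 * (σ t / lam t)^(κ+1)
      + m1 * (σ t / lam t)^(κ+1) * (lam t)⁻¹
      + (m2 + ρ t) * (σ t / lam t)^(κ+1) * ((lam t)⁻¹ * (lam t)⁻¹)) atTop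
      (𝓝 (m0 * (cm1⁻¹)^(κ+1) + m1 * (cm1⁻¹)^(κ+1) * 0
        + (m2 + 0) * (cm1⁻¹)^(κ+1) * (0 * 0))) :=
    ((tendsto_const_nhds.mul (hr.pow _)).add
      ((tendsto_const_nhds.mul (hr.pow _)).mul hinvlam)).add
      (((tendsto_const_nhds.add hρ).mul (hr.pow _)).mul (hinvlam.mul hinvlam))
  have E1 : m0 * (cm1⁻¹)^(κ+1) + m1 * (cm1⁻¹)^(κ+1) * 0 + (m2+0) * (cm1⁻¹)^(κ+1) * (0*0)
      = 1 := tendsto_nhds_unique (T1.congr' heq') tendsto_const_nhds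
  have hm0 : m0 = cm1^(κ+1) := by
    rw [mul_zero, add_zero, zero_mul, mul_zero, add_zero] at E1
    have h2 : cm1⁻¹^(κ+1) * cm1^(κ+1) = 1 := by
      rw [← mul_pow, inv_mul_cancel₀ hc, one_pow]
    linear_combination cm1^(κ+1) * E1 - m0 * h2
  -- second conclusion
  have T2a : Tendsto (fun t => σ t * (1 - (cm1 * (σ t / lam t))^(κ+1))) atTop
      (𝓝 ((κ+1 : ℕ) * (c₀ * cm1⁻¹))) := tendstoPow _ _ _ hq hu (κ+1)
  have T2b : ∀ᶠ t in atTop, σ t * (1 - (cm1 * (σ t / lam t))^(κ+1))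
      = m1 * (σ t / lam t)^(κ+1) * (σ t / lam t)
        + (m2 + ρ t) * (σ t / lam t)^(κ+1) * ((σ t / lam t) * (lam t)⁻¹) := by
    filter_upwards [heq'] with t ht
    rw [hm0] at ht
    linear_combination (-(σ t)) * ht
  have T2c : Tendsto (fun t => m1 * (σ t / lam t)^(κ+1) * (σ t / lam t)
        + (m2 + ρ t) * (σ t / lam t)^(κ+1) * ((σ t / lam t) * (lam t)⁻¹)) atTop
      (𝓝 (m1 * (cm1⁻¹)^(κ+1) * cm1⁻¹ + (m2 + 0) * (cm1⁻¹)^(κ+1) * (cm1⁻¹ * 0))) :=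
    ((tendsto_const_nhds.mul (hr.pow _)).mul hr).add
      (((tendsto_const_nhds.add hρ).mul (hr.pow _)).mul (hr.mul hinvlam))
  have E2 : ((κ+1 : ℕ) : ℂ) * (c₀ * cm1⁻¹)
      = m1 * (cm1⁻¹)^(κ+1) * cm1⁻¹ + (m2+0) * (cm1⁻¹)^(κ+1) * (cm1⁻¹ * 0) :=
    tendsto_nhds_unique (T2a.congr' T2b) T2c
  have hm1 : m1 = (κ+1 : ℂ) * c₀ * m0 := by
    rw [mul_zero, mul_zero, add_zero] at E2
    have h2 : cm1⁻¹^(κ+1) * cm1^(κ+1) = 1 := by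
      rw [← mul_pow, inv_mul_cancel₀ hc, one_pow]
    have h3 : cm1⁻¹ * cm1 = 1 := inv_mul_cancel₀ hc
    rw [hm0]
    push_cast at E2 ⊢
    linear_combination (-(cm1^(κ+1)*cm1)) * E2 - (m1*cm1⁻¹*cm1) * h2
      + (((κ:ℂ)+1)*c₀*cm1^(κ+1) - m1) * h3
  -- third conclusion
  have TW : Tendsto (fun t => σ t * (σ t * (1 - cm1 * (σ t / lam t)))
      - c₀ * (cm1 * (σ t / lam t))^(κ+1) * σ t^2 * (lam t)⁻¹) atTop
      (𝓝 ((c₀*cm1⁻¹) * (((κ+1:ℕ):ℂ) * (c₀*cm1⁻¹)) + (c₁+0) * cm1⁻¹)) := by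
    have h : Tendsto (fun t => (c₀ * (σ t / lam t))
          * (σ t * (1 - (cm1 * (σ t / lam t))^(κ+1))) + (c₁ + ε t) * (σ t / lam t)) atTop
        (𝓝 ((c₀*cm1⁻¹) * (((κ+1:ℕ):ℂ) * (c₀*cm1⁻¹)) + (c₁+0) * cm1⁻¹)) :=
      ((tendsto_const_nhds.mul hr).mul T2a).add ((tendsto_const_nhds.add hε).mul hr)
    refine h.congr' ?_
    filter_upwards [hσ0, hlam0] with t h0 h1
    have I2 : (σ t) * (σ t)⁻¹ = 1 := mul_inv_cancel₀ h0
    have I3 : (lam t) * (lam t)⁻¹ = 1 := mul_inv_cancel₀ h1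
    simp only [hεdef]
    linear_combination (σ t)^2 * I3 - (c₁ * σ t * (lam t)⁻¹) * I2
  have TSum : Tendsto (fun t => (σ t * (1 - cm1 * (σ t / lam t)))
      * ∑ i ∈ range (κ+1), σ t * (1 - (cm1 * (σ t / lam t))^i)) atTop
      (𝓝 ((c₀*cm1⁻¹) * ∑ i ∈ range (κ+1), (i:ℂ) * (c₀*cm1⁻¹))) :=
    hu.mul (tendsto_finset_sum _ fun i _ => tendstoPow _ _ _ hq hu i)
  have T3a : Tendsto (fun t => σ t^2 * (1 - (cm1 * (σ t / lam t))^(κ+1))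
      - ((κ:ℂ)+1) * c₀ * (cm1 * (σ t / lam t))^(κ+1) * σ t^2 * (lam t)⁻¹) atTop
      (𝓝 (((κ+1:ℕ):ℂ) * ((c₀*cm1⁻¹) * (((κ+1:ℕ):ℂ) * (c₀*cm1⁻¹)) + (c₁+0) * cm1⁻¹)
        - (c₀*cm1⁻¹) * ∑ i ∈ range (κ+1), (i:ℂ) * (c₀*cm1⁻¹))) := by
    have h := (tendsto_const_nhds (x := (((κ+1:ℕ):ℂ))).mul TW).sub TSum
    refine h.congr ?_
    intro t
    have hid := hid2 (σ t) (cm1 * (σ t / lam t)) (κ+1)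
    push_cast at hid ⊢
    linear_combination (-1 : ℂ) * hid
  have T3b : ∀ᶠ t in atTop, σ t^2 * (1 - (cm1 * (σ t / lam t))^(κ+1))
      - ((κ:ℂ)+1) * c₀ * (cm1 * (σ t / lam t))^(κ+1) * σ t^2 * (lam t)⁻¹
      = (m2 + ρ t) * (σ t / lam t)^(κ+1) * ((σ t / lam t) * (σ t / lam t)) := by
    filter_upwards [heq'] with t ht
    rw [hm1, hm0] at ht
    push_cast at ht
    linear_combination (-(σ t)^2) * ht
  have T3c : Tendsto (fun t => (m2 + ρ t) * (σ t / lam t)^(κ+1)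
      * ((σ t / lam t) * (σ t / lam t))) atTop
      (𝓝 ((m2 + 0) * (cm1⁻¹)^(κ+1) * (cm1⁻¹ * cm1⁻¹))) :=
    ((tendsto_const_nhds.add hρ).mul (hr.pow _)).mul (hr.mul hr)
  have E3 : (((κ+1:ℕ):ℂ) * ((c₀*cm1⁻¹) * (((κ+1:ℕ):ℂ) * (c₀*cm1⁻¹)) + (c₁+0) * cm1⁻¹)
        - (c₀*cm1⁻¹) * ∑ i ∈ range (κ+1), (i:ℂ) * (c₀*cm1⁻¹))
      = (m2 + 0) * (cm1⁻¹)^(κ+1) * (cm1⁻¹ * cm1⁻¹) :=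
    tendsto_nhds_unique (T3a.congr' T3b) T3c
  refine ⟨hm0, hm1, ?_⟩
  rw [← Finset.sum_mul] at E3
  set S : ℂ := ∑ i ∈ range (κ+1), (i:ℂ) with hSdef
  have hS : S * 2 = ((κ:ℂ)+1) * κ := by
    rw [hSdef]
    have h := Finset.sum_range_id_mul_two (κ+1)
    have h2c := congrArg (Nat.cast (R := ℂ)) h
    push_cast at h2c
    simpa using h2c
  have h2 : cm1⁻¹^(κ+1) * cm1^(κ+1) = 1 := by
    rw [← mul_pow, inv_mul_cancel₀ hc, one_pow]
  have h3 : cm1⁻¹ * cm1 = 1 := inv_mul_cancel₀ hc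
  have hm2' : m2 = ((m2+0)*cm1⁻¹^(κ+1)*(cm1⁻¹*cm1⁻¹)) * (cm1^(κ+1)*cm1^2) := by
    linear_combination (-(m2)) * h2 - (m2*cm1⁻¹^(κ+1)*cm1^(κ+1)*(1+cm1⁻¹*cm1)) * h3
  rw [← E3] at hm2'
  rw [hm2']
  push_cast
  linear_combination ((((κ:ℂ)+1)^2*c₀^2*cm1^(κ+1) - c₀^2*S*cm1^(κ+1))*(cm1*cm1⁻¹+1)
    + ((κ:ℂ)+1)*c₁*cm1^(κ+1)*cm1) * h3 - (c₀^2*cm1^(κ+1)/2) * hS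

theorem dot_sum_mulVec {n : ℕ} (v u : Fin n → ℂ) (s : Finset ℕ)
    (M : ℕ → Matrix (Fin n) (Fin n) ℂ) :
    star v ⬝ᵥ (∑ j ∈ s, M j).mulVec u = ∑ j ∈ s, star v ⬝ᵥ (M j).mulVec u := by
  induction s using Finset.cons_induction with
  | empty => simp
  | cons a s ha ih => rw [Finset.sum_cons, Finset.sum_cons, Matrix.add_mulVec, dotProduct_add, ih]

theorem partA {n : ℕ} (A : Matrix (Fin n) (Fin n) ℂ) (u v : Fin n → ℂ)
    (T : ℝ) (lam : ℝ → ℂ) (N : ℕ)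
    (heig : ∀ t : ℝ, T ≤ t → lam t ∈ spectrum ℂ (A + (t : ℂ) • vecMulVec u (star v)))
    (hlam : Tendsto (fun t => ‖lam t‖) atTop atTop) :
    ∃ ρ : ℝ → ℂ, Tendsto ρ atTop (𝓝 0) ∧
      ∀ᶠ t : ℝ in atTop, (t:ℂ) * ((∑ j ∈ range N, (star v ⬝ᵥ (A^j).mulVec u) / lam t^(j+1))
        + ρ t / lam t ^ N) = 1 := by
  have hlaminv : Tendsto (fun t => (lam t)⁻¹) atTop (𝓝 0) := by
    rw [tendsto_zero_iff_norm_tendsto_zero]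
    simpa [norm_inv, Function.comp_def] using (tendsto_inv_atTop_zero.comp hlam)
  set C : ℝ → Matrix (Fin n) (Fin n) ℂ :=
    fun t => (1 : Matrix (Fin n) (Fin n) ℂ) - (lam t)⁻¹ • A with hC
  have hCt : Tendsto C atTop (𝓝 1) := by
    have h : Tendsto (fun t => (1:Matrix (Fin n) (Fin n) ℂ) - (lam t)⁻¹ • A) atTop
        (𝓝 (1 - (0:ℂ) • A)) := tendsto_const_nhds.sub (hlaminv.smul_const A)
    simpa using h
  have hCinv : Tendsto (fun t => (C t)⁻¹) atTop (𝓝 1) := by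
    have hcont : ContinuousAt Inv.inv (1 : Matrix (Fin n) (Fin n) ℂ) := by
      apply continuousAt_matrix_inv
      rw [Matrix.det_one, Ring.inverse_eq_inv']
      exact continuousAt_inv₀ one_ne_zero
    have h := hcont.tendsto.comp hCt
    have h1 : (1 : Matrix (Fin n) (Fin n) ℂ)⁻¹ = 1 := Matrix.inv_eq_right_inv (by simp)
    simpa [h1, Function.comp_def] using h
  have hdetC : Tendsto (fun t => (C t).det) atTop (𝓝 1) := by
    have hcont : Continuous fun M : Matrix (Fin n) (Fin n) ℂ => M.det :=
      continuous_id.matrix_det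
    have h := (hcont.tendsto 1).comp hCt
    simpa [Function.comp_def] using h
  have hdetC0 : ∀ᶠ t in atTop, (C t).det ≠ 0 := hdetC.eventually_ne one_ne_zero
  have hlam0 : ∀ᶠ t in atTop, lam t ≠ 0 := by
    filter_upwards [hlam.eventually_ge_atTop 1] with t h ht0
    rw [ht0, norm_zero] at h; linarith
  refine ⟨fun t => (lam t)⁻¹ * (star v ⬝ᵥ ((C t)⁻¹ * A ^ N).mulVec u), ?_, ?_⟩
  · have hcont : Continuous fun M : Matrix (Fin n) (Fin n) ℂ =>
        star v ⬝ᵥ (M * A ^ N).mulVec u :=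
      continuous_const.dotProduct
        ((continuous_id.matrix_mul continuous_const).matrix_mulVec continuous_const)
    have h2 := (hcont.tendsto 1).comp hCinv
    have h3 := hlaminv.mul h2
    simpa using h3
  · filter_upwards [hdetC0, hlam0, eventually_ge_atTop (max T 1)] with t hdet hl ht
    have hT : T ≤ t := le_trans (le_max_left _ _) ht
    have ht1 : (1:ℝ) ≤ t := le_trans (le_max_right _ _) ht
    have ht0 : (t:ℂ) ≠ 0 := by
      simp only [ne_eq, Complex.ofReal_eq_zero]
      nlinarith
    set B : Matrix (Fin n) (Fin n) ℂ := lam t • 1 - A with hB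
    have hBC : B = lam t • C t := by
      rw [hC, hB, smul_sub, smul_smul, mul_inv_cancel₀ hl, one_smul]
    have hdetB : IsUnit B.det := by
      rw [hBC, Matrix.det_smul]
      exact isUnit_iff_ne_zero.2 (mul_ne_zero (pow_ne_zero _ hl) hdet)
    have hdetCu : IsUnit (C t).det := isUnit_iff_ne_zero.2 hdet
    have hBinv : B⁻¹ = (lam t)⁻¹ • (C t)⁻¹ := by
      apply Matrix.inv_eq_right_inv
      rw [hBC, Matrix.smul_mul, Matrix.mul_smul, smul_smul, mul_inv_cancel₀ hl, one_smul,
        Matrix.mul_nonsing_inv _ hdetCu]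
    -- spectrum fact
    have hspec := heig t hT
    rw [spectrum.mem_iff, Algebra.algebraMap_eq_smul_one] at hspec
    have hdet0 : (lam t • (1 : Matrix (Fin n) (Fin n) ℂ)
        - (A + (t:ℂ) • vecMulVec u (star v))).det = 0 := by
      by_contra h
      exact hspec ((Matrix.isUnit_iff_isUnit_det _).2 (isUnit_iff_ne_zero.2 h))
    have hsplit : lam t • (1 : Matrix (Fin n) (Fin n) ℂ)
        - (A + (t:ℂ) • vecMulVec u (star v))
        = B + replicateCol Unit ((-(t:ℂ)) • u) * replicateRow Unit (star v) := by
      rw [hB]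
      ext i j
      simp [Matrix.mul_apply, Matrix.vecMulVec, Matrix.replicateCol, Matrix.replicateRow]
      ring
    have hdet1 : ((1 : Matrix Unit Unit ℂ)
        + replicateRow Unit (star v) * B⁻¹ * replicateCol Unit ((-(t:ℂ)) • u)).det
        = 1 - (t:ℂ) * (star v ⬝ᵥ B⁻¹.mulVec u) := by
      rw [Matrix.det_unique]
      simp only [Matrix.add_apply, Matrix.one_apply_eq, Matrix.mul_apply, Matrix.replicateRow_apply,
        Matrix.replicateCol_apply, dotProduct, Matrix.mulVec, Pi.smul_apply, smul_eq_mul]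
      have key : ∑ x : Fin n, (∑ x1 : Fin n, star v x1 * B⁻¹ x1 x) * (-(t:ℂ) * u x)
          = ∑ x : Fin n, ∑ x1 : Fin n, -((t:ℂ) * (star v x1 * (B⁻¹ x1 x * u x))) := by
        refine Finset.sum_congr rfl fun j _ => ?_
        rw [Finset.sum_mul]
        refine Finset.sum_congr rfl fun i _ => ?_
        ring
      rw [key, Finset.sum_comm, sub_eq_add_neg]
      congr 1
      simp only [Finset.mul_sum, ← Finset.sum_neg_distrib]
    rw [hsplit, Matrix.det_add_replicateCol_mul_replicateRow hdetB, hdet1] at hdet0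
    have hs : (t:ℂ) * (star v ⬝ᵥ B⁻¹.mulVec u) = 1 := by
      rcases mul_eq_zero.1 hdet0 with h | h
      · exact absurd h hdetB.ne_zero
      · linear_combination -h
    -- resolvent expansion
    have htele : B * (∑ j ∈ range N, ((lam t)⁻¹)^(j+1) • A^j)
        = 1 - ((lam t)⁻¹)^N • A^N := by
      rw [Matrix.mul_sum]
      have hterm : ∀ j, B * (((lam t)⁻¹)^(j+1) • A^j)
          = ((lam t)⁻¹)^j • A^j - ((lam t)⁻¹)^(j+1) • A^(j+1) := by
        intro j
        have hsc : lam t * ((lam t)⁻¹)^(j+1) = ((lam t)⁻¹)^j := by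
          rw [pow_succ, mul_comm (((lam t)⁻¹)^j), ← mul_assoc, mul_inv_cancel₀ hl, one_mul]
        rw [hB, Matrix.sub_mul, Matrix.smul_mul, Matrix.one_mul, smul_smul, hsc,
          Matrix.mul_smul, ← pow_succ']
      simp_rw [hterm]
      rw [Finset.sum_range_sub']
      simp
    have hexpand : B⁻¹ = (∑ j ∈ range N, ((lam t)⁻¹)^(j+1) • A^j)
        + ((lam t)⁻¹)^N • (B⁻¹ * A^N) := by
      have h1 := congrArg (fun M => B⁻¹ * M) htele
      simp only [Matrix.nonsing_inv_mul_cancel_left _ _ hdetB, Matrix.mul_sub,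
        Matrix.mul_one, Matrix.mul_smul] at h1
      rw [h1]
      abel
    have hscal : star v ⬝ᵥ B⁻¹.mulVec u
        = (∑ j ∈ range N, ((lam t)⁻¹)^(j+1) * (star v ⬝ᵥ (A^j).mulVec u))
          + ((lam t)⁻¹)^N * (star v ⬝ᵥ (B⁻¹ * A^N).mulVec u) := by
      conv_lhs => rw [hexpand]
      rw [Matrix.add_mulVec, dotProduct_add, dot_sum_mulVec,
        Matrix.smul_mulVec, dotProduct_smul, smul_eq_mul]
      congr 1
      refine Finset.sum_congr rfl fun j _ => ?_
      rw [Matrix.smul_mulVec, dotProduct_smul, smul_eq_mul]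
    have hrho : star v ⬝ᵥ (B⁻¹ * A^N).mulVec u
        = (lam t)⁻¹ * (star v ⬝ᵥ ((C t)⁻¹ * A ^ N).mulVec u) := by
      rw [hBinv, Matrix.smul_mul, Matrix.smul_mulVec, dotProduct_smul, smul_eq_mul]
    rw [← hs]
    congr 1
    rw [hscal, hrho]
    congr 1
    · refine Finset.sum_congr rfl fun j _ => ?_
      rw [div_eq_mul_inv, ← inv_pow, mul_comm]
    · rw [div_eq_mul_inv, ← inv_pow, mul_comm]


theorem stmt10 {n : ℕ} (A : Matrix (Fin n) (Fin n) ℂ) (u v : Fin n → ℂ) (κ : ℕ)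
    (hκl : κ < (minpoly ℂ A).natDegree)
    (h0 : ∀ j < κ, star v ⬝ᵥ (A ^ j).mulVec u = 0)
    (hκ0 : star v ⬝ᵥ (A ^ κ).mulVec u ≠ 0)
    (T : ℝ) (lam : ℝ → ℂ) (cm1 c₀ c₁ : ℂ) (hc : cm1 ≠ 0)
    (heig : ∀ t : ℝ, T ≤ t → lam t ∈ spectrum ℂ (A + (t : ℂ) • vecMulVec u (star v)))
    (hexp : (fun t : ℝ => lam t -
        (cm1 * ((t ^ ((1 : ℝ) / (κ + 1)) : ℝ) : ℂ) + c₀ +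
          c₁ * ((t ^ (-(1 : ℝ) / (κ + 1)) : ℝ) : ℂ)))
      =o[atTop] fun t : ℝ => ((t ^ (-(1 : ℝ) / (κ + 1)) : ℝ) : ℂ)) :
    cm1 ^ (κ + 1) = star v ⬝ᵥ (A ^ κ).mulVec u ∧
    c₀ = (1 / (κ + 1 : ℂ)) * (star v ⬝ᵥ (A ^ (κ + 1)).mulVec u) /
      (star v ⬝ᵥ (A ^ κ).mulVec u) ∧
    (κ + 1 : ℂ) * (((κ + 2 : ℂ) / 2) * cm1 ^ (κ + 1) * c₀ ^ 2 + cm1 ^ (κ + 2) * c₁) =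
      star v ⬝ᵥ (A ^ (κ + 2)).mulVec u := by
  set s : ℝ → ℝ := fun t => t ^ ((1:ℝ)/(κ+1)) with hsdef
  set σ : ℝ → ℂ := fun t => ((s t : ℝ) : ℂ) with hσdef
  have hpos : (0:ℝ) < 1/(κ+1) := by positivity
  have hsTop : Tendsto s atTop atTop := tendsto_rpow_atTop hpos
  have hσ0 : ∀ᶠ t : ℝ in atTop, σ t ≠ 0 := by
    filter_upwards [eventually_ge_atTop (1:ℝ)] with t ht
    have : 0 < s t := Real.rpow_pos_of_pos (by linarith) _
    simp only [hσdef, ne_eq, Complex.ofReal_eq_zero]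
    linarith
  have hσinv : Tendsto (fun t => (σ t)⁻¹) atTop (𝓝 0) := by
    have h1 : Tendsto (fun t => (s t)⁻¹) atTop (𝓝 0) := tendsto_inv_atTop_zero.comp hsTop
    have h2 := (Complex.continuous_ofReal.tendsto 0).comp h1
    refine h2.congr fun t => ?_
    simp [hσdef]
  -- the little-o gives the ε-limit
  have hε : Tendsto (fun t => (lam t - (cm1 * σ t + c₀ + c₁ / σ t)) * σ t) atTop (𝓝 0) := by
    have h1 := hexp.tendsto_div_nhds_zero
    refine h1.congr' ?_
    filter_upwards [eventually_ge_atTop (1:ℝ), hσ0] with t ht hσt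
    have ht0 : (0:ℝ) ≤ t := by linarith
    have hgt : (t ^ (-(1:ℝ)/(κ+1)) : ℝ) = (s t)⁻¹ := by
      rw [hsdef, neg_div, Real.rpow_neg ht0]
    have hgt' : ((t ^ (-(1:ℝ)/(κ+1)) : ℝ) : ℂ) = (σ t)⁻¹ := by
      rw [hgt, hσdef]; push_cast; ring
    rw [hgt', div_inv_eq_mul]
    ring
  -- lam / σ tends to cm1, norm of lam tends to infinity
  have hdiv : Tendsto (fun t => lam t / σ t) atTop (𝓝 cm1) := by
    have h : Tendsto (fun t => cm1 + c₀ * (σ t)⁻¹ + c₁ * ((σ t)⁻¹*(σ t)⁻¹)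
        + ((lam t - (cm1 * σ t + c₀ + c₁ / σ t)) * σ t) * ((σ t)⁻¹*(σ t)⁻¹)) atTop
        (𝓝 (cm1 + c₀*0 + c₁*(0*0) + 0*(0*0))) :=
      ((tendsto_const_nhds.add (tendsto_const_nhds.mul hσinv)).add
        (tendsto_const_nhds.mul (hσinv.mul hσinv))).add (hε.mul (hσinv.mul hσinv))
    simp only [mul_zero, zero_mul, add_zero] at h
    refine h.congr' ?_
    filter_upwards [hσ0] with t h0
    field_simp
    ring
  have hlamnorm : Tendsto (fun t => ‖lam t‖) atTop atTop := by
    have h1 : Tendsto (fun t => ‖lam t / σ t‖) atTop (𝓝 ‖cm1‖) := hdiv.norm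
    have h2 : Tendsto (fun t => ‖σ t‖) atTop atTop := by
      refine hsTop.congr' ?_
      filter_upwards [eventually_ge_atTop (0:ℝ)] with t ht
      simp [hσdef, hsdef, abs_of_nonneg (Real.rpow_nonneg ht _), one_div]
    have h3 := Filter.Tendsto.pos_mul_atTop (norm_pos_iff.2 hc) h1 h2
    refine h3.congr' ?_
    filter_upwards [hσ0] with t h0
    rw [← norm_mul, div_mul_cancel₀ _ h0]
  obtain ⟨ρ, hρ, heqA⟩ := partA A u v T lam (κ+3) heig hlamnorm
  have heq : ∀ᶠ t : ℝ in atTop, (σ t)^(κ+1) * ((star v ⬝ᵥ (A^κ).mulVec u) / lam t^(κ+1)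
      + (star v ⬝ᵥ (A^(κ+1)).mulVec u) / lam t^(κ+2)
      + ((star v ⬝ᵥ (A^(κ+2)).mulVec u) + ρ t) / lam t^(κ+3)) = 1 := by
    filter_upwards [heqA, eventually_ge_atTop (1:ℝ)] with t hA ht1
    have ht0 : (0:ℝ) ≤ t := by linarith
    have hts : ((t:ℝ):ℂ) = (σ t)^(κ+1) := by
      have hr : (s t)^(κ+1) = t := by
        have hexp1 : (1/((κ:ℝ)+1)) * ((κ+1:ℕ):ℝ) = 1 := by
          push_cast
          field_simp
        rw [hsdef, ← Real.rpow_natCast (t ^ ((1:ℝ)/(κ+1))) (κ+1), ← Real.rpow_mul ht0,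
          hexp1, Real.rpow_one]
      rw [hσdef]
      rw [show ((s t : ℝ) : ℂ)^(κ+1) = (((s t)^(κ+1) : ℝ) : ℂ) by push_cast; ring, hr]
    rw [← hts, ← hA]
    congr 1
    rw [Finset.sum_range_succ, Finset.sum_range_succ, Finset.sum_range_succ,
      Finset.sum_eq_zero (fun j hj => by rw [h0 j (Finset.mem_range.1 hj), zero_div])]
    ring
  obtain ⟨hm0, hm1, hm2⟩ := keyAsym κ cm1 c₀ c₁ _ _ _ hc σ lam ρ hσ0 hσinv hε hρ heq
  refine ⟨hm0.symm, ?_, hm2.symm⟩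
  have hκℂ : ((κ:ℂ)+1) ≠ 0 := Nat.cast_add_one_ne_zero κ
  rw [hm1]
  field_simp
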